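/- Suppose M₁, M₂, M₃ are the first three moments of some probability distribution on [0,1] and not all equal (M₁ = M₂ = M₃ fails). Then the three-point measure F̄ = f₁δ₀ + f₂δ_{x₂} + f₃δ₁ with x₂ = (M₂ − M₃)/(M₁ − M₂), f₂ = (M₁ − M₂)³/((M₂ − M₃)(M₁ − 2M₂ + M₃)), f₃ = (M₁M₃ − M₂²)/(M₁ − 2M₂ + M₃), f₁ = 1 − f₂ − f₃, is a probability distribution on [0,1] with E[X^m] = M_m for m = 1, 2, 3. -/

import Mathlib

open MeasureTheory

lemma aux_int_dirac {f : ℝ → ℝ} (hf : Measurable f) (a : ℝ) :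
    Integrable f (Measure.dirac a) := by
  refine ⟨hf.aestronglyMeasurable, ?_⟩
  simp [HasFiniteIntegral, lintegral_dirac]

/-- If `(M₁, M₂, M₃)` are the first three moments of some probability distribution on
`[0,1]` and are not all equal, then the three-point measure
`F̄ = f₁δ₀ + f₂δ_{x₂} + f₃δ₁` with `x₂ = (M₂−M₃)/(M₁−M₂)`,
`f₂ = (M₁−M₂)³/((M₂−M₃)(M₁−2M₂+M₃))`, `f₃ = (M₁M₃−M₂²)/(M₁−2M₂+M₃)`,
`f₁ = 1 − f₂ − f₃`, is a probability distribution on `[0,1]` with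
`E[X^m] = M_m` for `m = 1, 2, 3`. -/
theorem stmt14 (M₁ M₂ M₃ : ℝ)
    (hmom : ∃ F : Measure ℝ, IsProbabilityMeasure F ∧ F (Set.Icc (0 : ℝ) 1)ᶜ = 0 ∧
      (∫ x, x ∂F) = M₁ ∧ (∫ x, x ^ 2 ∂F) = M₂ ∧ (∫ x, x ^ 3 ∂F) = M₃)
    (hne : ¬(M₁ = M₂ ∧ M₂ = M₃)) :
    let x₂ : ℝ := (M₂ - M₃) / (M₁ - M₂)
    let f₂ : ℝ := (M₁ - M₂) ^ 3 / ((M₂ - M₃) * (M₁ - 2 * M₂ + M₃))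
    let f₃ : ℝ := (M₁ * M₃ - M₂ ^ 2) / (M₁ - 2 * M₂ + M₃)
    let f₁ : ℝ := 1 - f₂ - f₃
    let Fbar : Measure ℝ := ENNReal.ofReal f₁ • Measure.dirac 0
      + ENNReal.ofReal f₂ • Measure.dirac x₂ + ENNReal.ofReal f₃ • Measure.dirac 1
    0 ≤ f₁ ∧ 0 ≤ f₂ ∧ 0 ≤ f₃ ∧ f₁ + f₂ + f₃ = 1 ∧ x₂ ∈ Set.Icc (0 : ℝ) 1 ∧
      IsProbabilityMeasure Fbar ∧ Fbar (Set.Icc (0 : ℝ) 1)ᶜ = 0 ∧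
      (∫ x, x ∂Fbar) = M₁ ∧ (∫ x, x ^ 2 ∂Fbar) = M₂ ∧ (∫ x, x ^ 3 ∂Fbar) = M₃ := by
  obtain ⟨F, hF, hFc, hM1, hM2, hM3⟩ := hmom
  have haeIcc : ∀ᵐ x ∂F, x ∈ Set.Icc (0 : ℝ) 1 := by
    rw [ae_iff]; convert hFc using 2; rfl
  -- integrability of powers
  have hint : ∀ m : ℕ, Integrable (fun x : ℝ => x ^ m) F := by
    intro m
    refine Integrable.mono' (integrable_const 1)
      ((measurable_id.pow_const m).aestronglyMeasurable) ?_
    filter_upwards [haeIcc] with x hx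
    have h1 : |x| ≤ 1 := abs_le.mpr ⟨by linarith [hx.1], hx.2⟩
    calc ‖x ^ m‖ = |x| ^ m := by rw [Real.norm_eq_abs, abs_pow]
      _ ≤ 1 := pow_le_one₀ (abs_nonneg x) h1
  have hi1 : Integrable (fun x : ℝ => x) F := by simpa using hint 1
  have hi2 := hint 2
  have hi3 := hint 3
  -- integral of cubic polynomials
  have hpoly : ∀ a b c d : ℝ,
      ∫ x, (a * x ^ 3 + b * x ^ 2 + c * x + d) ∂F = a * M₃ + b * M₂ + c * M₁ + d := by
    intro a b c d
    have h1 : Integrable (fun x : ℝ => a * x ^ 3) F := hi3.const_mul a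
    have h2 : Integrable (fun x : ℝ => b * x ^ 2) F := hi2.const_mul b
    have h3 : Integrable (fun x : ℝ => c * x) F := hi1.const_mul c
    have h12 : Integrable (fun x : ℝ => a * x ^ 3 + b * x ^ 2) F := h1.add h2
    have h123 : Integrable (fun x : ℝ => a * x ^ 3 + b * x ^ 2 + c * x) F := h12.add h3
    rw [integral_add h123 (integrable_const d), integral_add h12 h3, integral_add h1 h2,
      integral_const_mul, integral_const_mul, integral_const_mul, integral_const,
      hM1, hM2, hM3, probReal_univ, one_smul]
  -- not degenerate on {0,1}
  have hdeg : ¬ (∀ᵐ x ∂F, x = 0 ∨ x = 1) := by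
    intro h
    apply hne
    have h2 : ∀ᵐ x ∂F, x ^ 2 = x := h.mono (by rintro x (rfl | rfl) <;> norm_num)
    have h3 : ∀ᵐ x ∂F, x ^ 3 = x := h.mono (by rintro x (rfl | rfl) <;> norm_num)
    have e2 : M₂ = M₁ := by rw [← hM1, ← hM2]; exact integral_congr_ae h2
    have e3 : M₃ = M₁ := by rw [← hM1, ← hM3]; exact integral_congr_ae h3
    exact ⟨e2.symm, by rw [e2, e3]⟩
  -- generic positivity lemma
  have key : ∀ p : ℝ → ℝ, Integrable p F → (∀ x ∈ Set.Icc (0:ℝ) 1, 0 ≤ p x) →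
      (∀ x ∈ Set.Icc (0:ℝ) 1, p x = 0 → x = 0 ∨ x = 1) → 0 < ∫ x, p x ∂F := by
    intro p hip hpos hzero
    have hpae : 0 ≤ᵐ[F] p := haeIcc.mono fun x hx => hpos x hx
    rcases (integral_nonneg_of_ae hpae).lt_or_eq with h | h
    · exact h
    · exfalso
      apply hdeg
      have h0 : p =ᵐ[F] 0 := (integral_eq_zero_iff_of_nonneg_ae hpae hip).mp h.symm
      filter_upwards [haeIcc, h0] with x hx hpx
      exact hzero x hx hpx
  have ic : ∀ a b c d : ℝ, Integrable (fun x : ℝ => a * x ^ 3 + b * x ^ 2 + c * x + d) F :=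
    fun a b c d => (((hi3.const_mul a).add (hi2.const_mul b)).add (hi1.const_mul c)).add
      (integrable_const d)
  have hA : 0 < M₁ - M₂ := by
    have h := key (fun x => x * (1 - x))
      (((ic 0 (-1) 1 0)).congr (by filter_upwards with x; ring))
      (fun x hx => mul_nonneg hx.1 (by linarith [hx.2]))
      (fun x _ hx => by
        rcases mul_eq_zero.mp hx with h | h
        exacts [Or.inl h, Or.inr (by linarith)])
    have e : ∫ x, x * (1 - x) ∂F = M₁ - M₂ := by
      rw [show (fun x : ℝ => x * (1 - x))
          = fun x => (0:ℝ) * x ^ 3 + (-1) * x ^ 2 + 1 * x + 0 from funext fun x => by ring,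
        hpoly]
      ring
    linarith [e ▸ h]
  have hB : 0 < M₂ - M₃ := by
    have h := key (fun x => x ^ 2 * (1 - x))
      (((ic (-1) 1 0 0)).congr (by filter_upwards with x; ring))
      (fun x hx => mul_nonneg (sq_nonneg x) (by linarith [hx.2]))
      (fun x _ hx => by
        rcases mul_eq_zero.mp hx with h | h
        exacts [Or.inl (by nlinarith [sq_nonneg x]), Or.inr (by linarith)])
    have e : ∫ x, x ^ 2 * (1 - x) ∂F = M₂ - M₃ := by
      rw [show (fun x : ℝ => x ^ 2 * (1 - x))
          = fun x => (-1:ℝ) * x ^ 3 + 1 * x ^ 2 + 0 * x + 0 from funext fun x => by ring,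
        hpoly]
      ring
    linarith [e ▸ h]
  have hD : 0 < M₁ - 2 * M₂ + M₃ := by
    have h := key (fun x => x * (1 - x) ^ 2)
      (((ic 1 (-2) 1 0)).congr (by filter_upwards with x; ring))
      (fun x hx => mul_nonneg hx.1 (sq_nonneg _))
      (fun x _ hx => by
        rcases mul_eq_zero.mp hx with h | h
        exacts [Or.inl h, Or.inr (by nlinarith [sq_nonneg (1 - x)])])
    have e : ∫ x, x * (1 - x) ^ 2 ∂F = M₁ - 2 * M₂ + M₃ := by
      rw [show (fun x : ℝ => x * (1 - x) ^ 2)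
          = fun x => (1:ℝ) * x ^ 3 + (-2) * x ^ 2 + 1 * x + 0 from funext fun x => by ring,
        hpoly]
      ring
    linarith [e ▸ h]
  have hAne : M₁ - M₂ ≠ 0 := ne_of_gt hA
  have hBne : M₂ - M₃ ≠ 0 := ne_of_gt hB
  have hDne : M₁ - 2 * M₂ + M₃ ≠ 0 := ne_of_gt hD
  -- Cauchy-Schwarz type inequality
  have hCS : 0 ≤ M₁ * M₃ - M₂ ^ 2 := by
    have hI : ∫ x, x * ((M₁ - M₂) * x - (M₂ - M₃)) ^ 2 ∂F
        = (M₁ * M₃ - M₂ ^ 2) * (M₁ - 2 * M₂ + M₃) := by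
      rw [show (fun x : ℝ => x * ((M₁ - M₂) * x - (M₂ - M₃)) ^ 2)
          = fun x => (M₁ - M₂) ^ 2 * x ^ 3 + (-(2 * (M₁ - M₂) * (M₂ - M₃))) * x ^ 2
            + (M₂ - M₃) ^ 2 * x + 0 from funext fun x => by ring,
        hpoly]
      ring
    have hpos : 0 ≤ ∫ x, x * ((M₁ - M₂) * x - (M₂ - M₃)) ^ 2 ∂F :=
      integral_nonneg_of_ae (haeIcc.mono fun x hx => mul_nonneg hx.1 (sq_nonneg _))
    nlinarith [hI ▸ hpos]
  -- the J integral controlling f₁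
  have hJ : 0 ≤ (M₁ - M₂) ^ 2 * M₂ - 2 * (M₁ - M₂) * (M₂ - M₃) * M₁ + (M₂ - M₃) ^ 2
      - (M₁ - M₂) ^ 2 * M₃ + 2 * (M₁ - M₂) * (M₂ - M₃) * M₂ - (M₂ - M₃) ^ 2 * M₁ := by
    have hJe : ∫ x, (1 - x) * ((M₁ - M₂) * x - (M₂ - M₃)) ^ 2 ∂F
        = (M₁ - M₂) ^ 2 * M₂ - 2 * (M₁ - M₂) * (M₂ - M₃) * M₁ + (M₂ - M₃) ^ 2
          - (M₁ - M₂) ^ 2 * M₃ + 2 * (M₁ - M₂) * (M₂ - M₃) * M₂ - (M₂ - M₃) ^ 2 * M₁ := by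
      rw [show (fun x : ℝ => (1 - x) * ((M₁ - M₂) * x - (M₂ - M₃)) ^ 2)
          = fun x => (-(M₁ - M₂) ^ 2) * x ^ 3
            + ((M₁ - M₂) ^ 2 + 2 * (M₁ - M₂) * (M₂ - M₃)) * x ^ 2
            + (-(2 * (M₁ - M₂) * (M₂ - M₃)) - (M₂ - M₃) ^ 2) * x
            + (M₂ - M₃) ^ 2 from funext fun x => by ring,
        hpoly]
      ring
    have hpos : 0 ≤ ∫ x, (1 - x) * ((M₁ - M₂) * x - (M₂ - M₃)) ^ 2 ∂F :=
      integral_nonneg_of_ae (haeIcc.mono fun x hx =>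
        mul_nonneg (by linarith [hx.2]) (sq_nonneg _))
    linarith [hJe ▸ hpos]
  intro x₂ f₂ f₃ f₁ Fbar
  have hf₂ : 0 ≤ f₂ := by
    show (0:ℝ) ≤ (M₁ - M₂) ^ 3 / ((M₂ - M₃) * (M₁ - 2 * M₂ + M₃))
    positivity
  have hf₃ : 0 ≤ f₃ := div_nonneg hCS hD.le
  have hf₁ : 0 ≤ f₁ := by
    show (0:ℝ) ≤ 1 - f₂ - f₃
    have hid : (1 - f₂ - f₃) * (M₂ - M₃) ^ 2
        = (M₁ - M₂) ^ 2 * M₂ - 2 * (M₁ - M₂) * (M₂ - M₃) * M₁ + (M₂ - M₃) ^ 2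
          - (M₁ - M₂) ^ 2 * M₃ + 2 * (M₁ - M₂) * (M₂ - M₃) * M₂ - (M₂ - M₃) ^ 2 * M₁ := by
      show (1 - (M₁ - M₂) ^ 3 / ((M₂ - M₃) * (M₁ - 2 * M₂ + M₃))
          - (M₁ * M₃ - M₂ ^ 2) / (M₁ - 2 * M₂ + M₃)) * (M₂ - M₃) ^ 2 = _
      have hD' : M₁ - M₂ * 2 + M₃ ≠ 0 := by contrapose! hDne; linarith
      have hD'' : -(M₂ * 2) + M₃ + M₁ ≠ 0 := by contrapose! hDne; linarith
      field_simp
      ring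
    nlinarith [hid, hJ, pow_pos hB 2]
  have hsum : f₁ + f₂ + f₃ = 1 := by show 1 - f₂ - f₃ + f₂ + f₃ = 1; ring
  have hx₂ : x₂ ∈ Set.Icc (0:ℝ) 1 := by
    constructor
    · exact div_nonneg hB.le hA.le
    · rw [div_le_one hA]; linarith
  have hcomp : ∀ g : ℝ → ℝ, Measurable g →
      ∫ x, g x ∂Fbar = f₁ * g 0 + f₂ * g x₂ + f₃ * g 1 := by
    intro g hg
    have d : ∀ a : ℝ, Integrable g (Measure.dirac a) := aux_int_dirac hg
    have s : ∀ (c : ℝ) (a : ℝ), Integrable g (ENNReal.ofReal c • Measure.dirac a) :=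
      fun c a => (d a).smul_measure ENNReal.ofReal_ne_top
    show ∫ x, g x ∂((ENNReal.ofReal f₁ • Measure.dirac 0 + ENNReal.ofReal f₂ • Measure.dirac x₂
      + ENNReal.ofReal f₃ • Measure.dirac 1 : Measure ℝ)) = _
    rw [integral_add_measure ((s f₁ 0).add_measure (s f₂ x₂)) (s f₃ 1),
      integral_add_measure (s f₁ 0) (s f₂ x₂),
      integral_smul_measure, integral_smul_measure, integral_smul_measure,
      integral_dirac, integral_dirac, integral_dirac,
      ENNReal.toReal_ofReal hf₁, ENNReal.toReal_ofReal hf₂, ENNReal.toReal_ofReal hf₃]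
    simp [smul_eq_mul]
  refine ⟨hf₁, hf₂, hf₃, hsum, hx₂, ?_, ?_, ?_, ?_, ?_⟩
  · constructor
    show (ENNReal.ofReal f₁ • Measure.dirac 0 + ENNReal.ofReal f₂ • Measure.dirac x₂
      + ENNReal.ofReal f₃ • Measure.dirac 1 : Measure ℝ) Set.univ = 1
    simp only [Measure.add_apply, Measure.smul_apply, smul_eq_mul, measure_univ, mul_one]
    rw [← ENNReal.ofReal_add hf₁ hf₂, ← ENNReal.ofReal_add (by linarith) hf₃]
    rw [show f₁ + f₂ + f₃ = 1 from hsum, ENNReal.ofReal_one]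
  · show (ENNReal.ofReal f₁ • Measure.dirac 0 + ENNReal.ofReal f₂ • Measure.dirac x₂
      + ENNReal.ofReal f₃ • Measure.dirac 1 : Measure ℝ) (Set.Icc (0:ℝ) 1)ᶜ = 0
    have m0 : Measure.dirac (0:ℝ) (Set.Icc (0:ℝ) 1)ᶜ = 0 := by
      rw [Measure.dirac_apply]
      simp [Set.indicator_apply, Set.mem_Icc]
    have m2 : Measure.dirac x₂ (Set.Icc (0:ℝ) 1)ᶜ = 0 := by
      rw [Measure.dirac_apply]
      simp only [Set.indicator_apply, Set.mem_compl_iff]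
      rw [if_neg (by simp [hx₂])]
    have m1 : Measure.dirac (1:ℝ) (Set.Icc (0:ℝ) 1)ᶜ = 0 := by
      rw [Measure.dirac_apply]
      simp [Set.indicator_apply, Set.mem_Icc]
    simp [Measure.add_apply, Measure.smul_apply, m0, m1, m2]
  · rw [show (fun x : ℝ => x) = fun x : ℝ => id x from rfl, hcomp id measurable_id]
    show f₁ * 0 + f₂ * x₂ + f₃ * 1 = M₁
    show (1 - f₂ - f₃) * 0 + (M₁ - M₂) ^ 3 / ((M₂ - M₃) * (M₁ - 2 * M₂ + M₃))
      * ((M₂ - M₃) / (M₁ - M₂)) + (M₁ * M₃ - M₂ ^ 2) / (M₁ - 2 * M₂ + M₃) * 1 = M₁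
    have hD' : M₁ - M₂ * 2 + M₃ ≠ 0 := by contrapose! hDne; linarith
    have hD'' : -(M₂ * 2) + M₃ + M₁ ≠ 0 := by contrapose! hDne; linarith
    field_simp
    ring
  · rw [hcomp (fun x => x ^ 2) (measurable_id.pow_const 2)]
    show f₁ * 0 ^ 2 + f₂ * x₂ ^ 2 + f₃ * 1 ^ 2 = M₂
    show (1 - f₂ - f₃) * 0 ^ 2 + (M₁ - M₂) ^ 3 / ((M₂ - M₃) * (M₁ - 2 * M₂ + M₃))
      * ((M₂ - M₃) / (M₁ - M₂)) ^ 2 + (M₁ * M₃ - M₂ ^ 2) / (M₁ - 2 * M₂ + M₃) * 1 ^ 2 = M₂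
    have hD' : M₁ - M₂ * 2 + M₃ ≠ 0 := by contrapose! hDne; linarith
    have hD'' : -(M₂ * 2) + M₃ + M₁ ≠ 0 := by contrapose! hDne; linarith
    field_simp
    ring
  · rw [hcomp (fun x => x ^ 3) (measurable_id.pow_const 3)]
    show f₁ * 0 ^ 3 + f₂ * x₂ ^ 3 + f₃ * 1 ^ 3 = M₃
    show (1 - f₂ - f₃) * 0 ^ 3 + (M₁ - M₂) ^ 3 / ((M₂ - M₃) * (M₁ - 2 * M₂ + M₃))
      * ((M₂ - M₃) / (M₁ - M₂)) ^ 3 + (M₁ * M₃ - M₂ ^ 2) / (M₁ - 2 * M₂ + M₃) * 1 ^ 3 = M₃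
    have hD' : M₁ - M₂ * 2 + M₃ ≠ 0 := by contrapose! hDne; linarith
    have hD'' : -(M₂ * 2) + M₃ + M₁ ≠ 0 := by contrapose! hDne; linarith
    field_simp
    ring
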